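/- Let a > 0, τ > 0, and let γ ∈ ℝ with |γ| > t_{a,τ}, where t_{a,τ} = τa if τ ≤ 1/(2a²) and t_{a,τ} = √(2τ) − 1/(2a) if τ > 1/(2a²). Define φ(γ) = arccos(27τa²/(2(1+a|γ|)³) − 1) and g_{a,τ}(γ) = sign(γ)·( ((1+a|γ|)/3)·(1 + 2cos(φ(γ)/3 − π/3)) − 1 )/a. Then g_{a,τ}(γ) is a global minimizer of f_{a,τ}(β) = (1/2)(β−γ)² + τ·a|β|/(a|β|+1) over ℝ, and g_{a,τ}(γ) ≠ 0. -/

import Mathlib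

set_option maxHeartbeats 1000000

lemma pos_case (a τ γ : ℝ) (ha : 0 < a) (hτ : 0 < τ) (hγpos : 0 < γ)
    (hcs : Real.sqrt (2 * (τ * a ^ 2)) + 1 / 2 < 1 + a * γ)
    (h1 : τ * a ^ 2 < a * γ ∨ 1 < 2 * (τ * a ^ 2))
    (φ : ℝ) (hφ : φ = Real.arccos (27 * τ * a ^ 2 / (2 * (1 + a * γ) ^ 3) - 1))
    (g : ℝ)
    (hg : g = ((1 + a * γ) / 3 * (1 + 2 * Real.cos (φ / 3 - Real.pi / 3)) - 1) / a) :
    0 < g ∧ ∀ β : ℝ, 0 ≤ β →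
      (1 / 2) * (g - γ) ^ 2 + τ * (a * g / (a * g + 1)) ≤
      (1 / 2) * (β - γ) ^ 2 + τ * (a * β / (a * β + 1)) := by
  have hπ := Real.pi_pos
  set c := 1 + a * γ with hc
  have haγ : 0 < a * γ := mul_pos ha hγpos
  have hc0 : 0 < c := by rw [hc]; linarith
  clear_value c
  set s := Real.sqrt (2 * (τ * a ^ 2)) with hs
  have hs0 : 0 ≤ s := Real.sqrt_nonneg _
  have hs2 : s ^ 2 = 2 * (τ * a ^ 2) := Real.sq_sqrt (by positivity)
  clear_value s
  have hT0 : 0 < τ * a ^ 2 := by positivity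
  have h4c : 27 * (τ * a ^ 2) < 4 * c ^ 3 := by
    have h3 : (s + 1/2) ^ 3 < c ^ 3 := by
      apply pow_lt_pow_left₀ hcs (by positivity)
      norm_num
    nlinarith [sq_nonneg (s - 1), mul_nonneg hs0 (sq_nonneg (s - 1))]
  have hA1 : -1 ≤ 27 * τ * a ^ 2 / (2 * c ^ 3) - 1 := by
    have : 0 ≤ 27 * τ * a ^ 2 / (2 * c ^ 3) := by positivity
    linarith
  have hA2 : 27 * τ * a ^ 2 / (2 * c ^ 3) - 1 < 1 := by
    rw [sub_lt_iff_lt_add, div_lt_iff₀ (by positivity)]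
    nlinarith [h4c]
  have hφπ : φ ≤ Real.pi := by rw [hφ]; exact Real.arccos_le_pi _
  have hφ0 : 0 < φ := by rw [hφ]; exact Real.arccos_pos.2 hA2
  have hcosφ : Real.cos φ = 27 * τ * a ^ 2 / (2 * c ^ 3) - 1 := by
    rw [hφ]; exact Real.cos_arccos hA1 hA2.le
  set K := Real.cos (φ / 3 - Real.pi / 3) with hKdef
  have hK2 : K ≤ 1 := Real.cos_le_one _
  have hK1 : 1 / 2 < K := by
    have h := Real.cos_lt_cos_of_nonneg_of_le_pi (x := Real.pi / 3 - φ / 3)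
      (y := Real.pi / 3) (by linarith) (by linarith) (by linarith)
    rw [Real.cos_pi_div_three] at h
    have heq : K = Real.cos (Real.pi / 3 - φ / 3) := by
      rw [hKdef, ← Real.cos_neg]; ring_nf
    linarith [heq ▸ h]
  have hK3 : 4 * K ^ 3 - 3 * K = 1 - 27 * τ * a ^ 2 / (2 * c ^ 3) := by
    have h3 : Real.cos (3 * (φ / 3 - Real.pi / 3)) = - Real.cos φ := by
      rw [show 3 * (φ / 3 - Real.pi / 3) = φ - Real.pi by ring, Real.cos_sub_pi]
    rw [Real.cos_three_mul] at h3
    rw [hKdef, h3, hcosφ]; ring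
  clear_value K
  have hK3' : (4 * K ^ 3 - 3 * K) * (2 * c ^ 3) = 2 * c ^ 3 - 27 * τ * a ^ 2 := by
    rw [hK3]
    field_simp
  set x := c / 3 * (1 + 2 * K) with hxdef
  have hxg : a * g + 1 = x := by rw [hg]; field_simp; ring
  have hroot : x ^ 3 - c * x ^ 2 + τ * a ^ 2 = 0 := by
    rw [hxdef]; linear_combination (1/27) * hK3'
  have hx23 : 2 * c / 3 < x := by
    rw [hxdef]; nlinarith [hc0, hK1]
  clear_value x
  have hcomp : ∀ w : ℝ, 0 ≤ w → w ^ 3 - c * w ^ 2 + τ * a ^ 2 < 0 → w < x := by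
    intro w hw0 hpw
    by_contra hle
    push_neg at hle
    have hd : 0 ≤ w - x := by linarith
    have hu : 0 ≤ x - 2 * c / 3 := by linarith
    have hv : 0 ≤ w - 2 * c / 3 := by linarith
    have factored : (w ^ 3 - c * w ^ 2 + τ * a ^ 2) - (x ^ 3 - c * x ^ 2 + τ * a ^ 2)
        = (w - x) * (c * (x - 2 * c / 3) + c * (w - 2 * c / 3) + (x - 2 * c / 3) ^ 2
          + (x - 2 * c / 3) * (w - 2 * c / 3) + (w - 2 * c / 3) ^ 2) := by ring
    have hbr : 0 ≤ c * (x - 2 * c / 3) + c * (w - 2 * c / 3) + (x - 2 * c / 3) ^ 2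
        + (x - 2 * c / 3) * (w - 2 * c / 3) + (w - 2 * c / 3) ^ 2 := by
      have h1 := mul_nonneg hc0.le hu
      have h2 := mul_nonneg hc0.le hv
      have h3 := mul_nonneg hu hv
      have h4 := sq_nonneg (x - 2 * c / 3)
      have h5 := sq_nonneg (w - 2 * c / 3)
      linarith
    have hmain : 0 ≤ (w - x) * (c * (x - 2 * c / 3) + c * (w - 2 * c / 3)
        + (x - 2 * c / 3) ^ 2 + (x - 2 * c / 3) * (w - 2 * c / 3) + (w - 2 * c / 3) ^ 2) :=
      mul_nonneg hd hbr
    linarith [hroot, hmain, factored]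
  have hxs : s < x := by
    apply hcomp s hs0
    have hs3 : s ^ 3 = (2 * (τ * a ^ 2)) * s := by
      rw [show s ^ 3 = s ^ 2 * s by ring, hs2]
    nlinarith [mul_pos hT0 (show 0 < c - s - 1/2 by linarith)]
  have hx1 : 1 < x := by
    rcases h1 with hl | hr
    · apply hcomp 1 zero_le_one
      rw [hc]; nlinarith [hl]
    · have : 1 < s := by nlinarith [hs2, hs0]
      linarith
  have hxpos : 0 < x := by linarith
  have h2cx : 2 * c - 2 * x < 1 := by
    have hx2 : 2 * (τ * a ^ 2) < x ^ 2 := by nlinarith [hxs, hs0, hs2]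
    have heq : x ^ 2 * (2 * c - 2 * x - 1) = 2 * (τ * a ^ 2) - x ^ 2 := by
      linear_combination (-2 : ℝ) * hroot
    nlinarith [mul_pos hxpos hxpos, heq, hx2]
  have hag : 0 < a * g := by linarith [hxg]
  have hg0 : 0 < g := by
    by_contra h
    push_neg at h
    nlinarith [mul_nonneg ha.le (neg_nonneg.2 h)]
  refine ⟨hg0, fun β hβ => ?_⟩
  have hXpos : 0 < a * β + 1 := by nlinarith [mul_nonneg ha.le hβ]
  have hX1 : 1 ≤ a * β + 1 := by nlinarith [mul_nonneg ha.le hβ]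
  have hτeq : τ = x ^ 2 * (c - x) / a ^ 2 := by
    rw [eq_div_iff (by positivity)]
    linear_combination hroot
  have hgx : g = (x - 1) / a := by
    rw [eq_div_iff ha.ne']
    linarith [hxg]
  have hdiff : (1/2) * (β - γ) ^ 2 + τ * (a * β / (a * β + 1))
      - ((1/2) * (g - γ) ^ 2 + τ * (a * g / (a * g + 1)))
      = ((a * β + 1) - x) ^ 2 * ((a * β + 1) - 2 * (c - x)) / (2 * a ^ 2 * (a * β + 1)) := by
    rw [hτeq, hgx, hc]
    have h2 : a * ((x - 1) / a) + 1 = x := by field_simp; ring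
    rw [h2]
    field_simp
    ring
  have hnum : 0 ≤ ((a * β + 1) - x) ^ 2 * ((a * β + 1) - 2 * (c - x)) :=
    mul_nonneg (sq_nonneg _) (by linarith)
  have hfrac : 0 ≤ ((a * β + 1) - x) ^ 2 * ((a * β + 1) - 2 * (c - x)) / (2 * a ^ 2 * (a * β + 1)) :=
    div_nonneg hnum (by positivity)
  linarith [hdiff, hfrac]

/-- If `|γ|` exceeds the threshold `t_{a,τ}`, then
`g_{a,τ}(γ) = sign(γ)·(((1+a|γ|)/3)(1+2cos(φ(γ)/3 − π/3)) − 1)/a`, with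
`φ(γ) = arccos(27τa²/(2(1+a|γ|)³) − 1)`, is a nonzero global minimizer of
`f_{a,τ}(β) = (1/2)(β−γ)² + τ·a|β|/(a|β|+1)`. -/
theorem g_is_global_minimizer (a τ γ : ℝ) (ha : 0 < a) (hτ : 0 < τ)
    (t : ℝ)
    (ht : t = if τ ≤ 1 / (2 * a ^ 2) then τ * a else Real.sqrt (2 * τ) - 1 / (2 * a))
    (hγ : |γ| > t)
    (φ : ℝ) (hφ : φ = Real.arccos (27 * τ * a ^ 2 / (2 * (1 + a * |γ|) ^ 3) - 1))
    (g : ℝ)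
    (hg : g = Real.sign γ *
      (((1 + a * |γ|) / 3 * (1 + 2 * Real.cos (φ / 3 - Real.pi / 3)) - 1) / a)) :
    (∀ β : ℝ,
      (1 / 2) * (g - γ) ^ 2 + τ * (a * |g| / (a * |g| + 1)) ≤
      (1 / 2) * (β - γ) ^ 2 + τ * (a * |β| / (a * |β| + 1))) ∧ g ≠ 0 := by
  have ha2 : 0 < a ^ 2 := by positivity
  have ht0 : 0 < t := by
    rw [ht]; split_ifs with h
    · positivity
    · push_neg at h
      have h' : 1 < τ * (2 * a ^ 2) := (div_lt_iff₀ (by positivity)).mp h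
      have hlt : 1 / (2 * a) < Real.sqrt (2 * τ) := by
        rw [Real.lt_sqrt (by positivity)]
        rw [div_pow, div_lt_iff₀ (by positivity)]
        nlinarith
      linarith
  have hγ0 : γ ≠ 0 := by
    intro h
    rw [h, abs_zero] at hγ
    linarith
  set m := |γ| with hm
  have hm0 : 0 < m := abs_pos.2 hγ0
  have hsqrt : Real.sqrt (2 * (τ * a ^ 2)) = a * Real.sqrt (2 * τ) := by
    rw [show 2 * (τ * a ^ 2) = 2 * τ * a ^ 2 by ring, Real.sqrt_mul (by positivity),
      Real.sqrt_sq ha.le]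
    ring
  have hs0 : 0 ≤ Real.sqrt (2 * (τ * a ^ 2)) := Real.sqrt_nonneg _
  have hs2 : Real.sqrt (2 * (τ * a ^ 2)) ^ 2 = 2 * (τ * a ^ 2) :=
    Real.sq_sqrt (by positivity)
  have hkey : Real.sqrt (2 * (τ * a ^ 2)) + 1 / 2 < 1 + a * m ∧
      (τ * a ^ 2 < a * m ∨ 1 < 2 * (τ * a ^ 2)) := by
    rw [ht] at hγ
    split_ifs at hγ with h
    · -- τ ≤ 1/(2a²), m > τ*a
      have ham : τ * a ^ 2 < a * m := by nlinarith [hγ, ha]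
      constructor
      · nlinarith [sq_nonneg (Real.sqrt (2 * (τ * a ^ 2)) - 1), hs2, ham]
      · exact Or.inl ham
    · push_neg at h
      have h' : 1 < τ * (2 * a ^ 2) := (div_lt_iff₀ (by positivity)).mp h
      have ham : a * (Real.sqrt (2 * τ) - 1 / (2 * a)) < a * m :=
        (mul_lt_mul_iff_right₀ ha).2 hγ
      have hexp : a * (Real.sqrt (2 * τ) - 1 / (2 * a)) = a * Real.sqrt (2 * τ) - 1 / 2 := by
        field_simp
      constructor
      · rw [hsqrt]; rw [hexp] at ham; linarith
      · right; nlinarith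
  set g' := ((1 + a * m) / 3 * (1 + 2 * Real.cos (φ / 3 - Real.pi / 3)) - 1) / a with hg'
  clear_value g'
  obtain ⟨hg'0, hmin⟩ := pos_case a τ m ha hτ hm0 hkey.1 hkey.2 φ hφ g' hg'
  rcases hγ0.lt_or_gt with hneg | hpos
  · -- γ < 0
    have hsign : Real.sign γ = -1 := Real.sign_of_neg hneg
    have hmγ : m = -γ := abs_of_neg hneg
    have hgg : g = -g' := by rw [hg, hsign, hg']; ring
    have habsg : |g| = g' := by rw [hgg, abs_neg, abs_of_pos hg'0]
    rw [hmγ] at hmin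
    constructor
    · intro β
      have h2 : (|β| - -γ) ^ 2 ≤ (β - γ) ^ 2 := by
        nlinarith [sq_abs β, mul_nonneg (neg_nonneg.2 hneg.le)
          (show (0:ℝ) ≤ β + |β| by linarith [neg_abs_le β])]
      have hsq : (g - γ) ^ 2 = (g' - -γ) ^ 2 := by rw [hgg]; ring
      have h := hmin |β| (abs_nonneg β)
      rw [habsg, hsq]
      linarith
    · rw [hgg]; exact neg_ne_zero.2 hg'0.ne'
  · -- γ > 0
    have hsign : Real.sign γ = 1 := Real.sign_of_pos hpos
    have hmγ : m = γ := abs_of_pos hpos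
    have hgg : g = g' := by rw [hg, hsign, hg']; ring
    have habsg : |g| = g' := by rw [hgg, abs_of_pos hg'0]
    rw [hmγ] at hmin
    constructor
    · intro β
      have h2 : (|β| - γ) ^ 2 ≤ (β - γ) ^ 2 := by
        nlinarith [sq_abs β, mul_nonneg hpos.le (sub_nonneg.2 (le_abs_self β))]
      have hsq : (g - γ) ^ 2 = (g' - γ) ^ 2 := by rw [hgg]
      have h := hmin |β| (abs_nonneg β)
      rw [habsg, hsq]
      linarith
    · rw [hgg]; exact hg'0.ne'
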